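/- Let Γ = Cay(Z_{2m}, S) be a circulant graph (S ⊆ Z_{2m} \ {0}, S = −S). If the Cayley graph Cay(Z_{2m}, (S \ {m}) + m) has an automorphism σ fixing 0 but moving m, then Γ admits a nontrivial TF-morphism, where the TF-morphism is given by x^α = x^σ + m and x^β = (x + m)^σ. -/
import Mathlib


def IsTF {V : Type*} (G : SimpleGraph V) (α β : Equiv.Perm V) : Prop :=
  ∀ u v : V, G.Adj u v → G.Adj (α u) (β v)

def IsTFS {V : Type*} (G : SimpleGraph V) (α β : Equiv.Perm V) : Prop :=
  (∀ u : V, G.Adj (α u) (β u)) ∧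
    ∀ u v : V, G.Adj u v → G.Adj (α u) (β v) ∨ α u = β v

open SimpleGraph

theorem stmt15 (m : ℕ) (hm : 0 < m) (S : Set (ZMod (2 * m)))
    (hS : ∀ s ∈ S, -s ∈ S) (h0 : (0 : ZMod (2 * m)) ∉ S)
    (σ : Equiv.Perm (ZMod (2 * m)))
    (hσadj : ∀ x y : ZMod (2 * m),
      (circulantGraph ((· + (m : ZMod (2 * m))) '' (S \ {(m : ZMod (2 * m))}))).Adj x y ↔
      (circulantGraph ((· + (m : ZMod (2 * m))) '' (S \ {(m : ZMod (2 * m))}))).Adj (σ x) (σ y))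
    (hσ0 : σ 0 = 0) (hσm : σ (m : ZMod (2 * m)) ≠ (m : ZMod (2 * m)))
    (α β : Equiv.Perm (ZMod (2 * m)))
    (hα : ∀ x, α x = σ x + (m : ZMod (2 * m)))
    (hβ : ∀ x, β x = σ (x + (m : ZMod (2 * m)))) :
    IsTF (circulantGraph S) α β ∧ α ≠ β := by
  set M : ZMod (2 * m) := (m : ZMod (2 * m)) with hM
  have hMM : M + M = 0 := by
    rw [hM, ← Nat.cast_add, ← two_mul, ZMod.natCast_self]
  have hMne : M ≠ 0 := by
    rw [hM]
    rw [Ne, ZMod.natCast_eq_zero_iff]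
    intro h
    have := Nat.le_of_dvd hm h
    omega
  have hnegM : -M = M := by
    rw [neg_eq_iff_add_eq_zero, hMM]
  -- membership in S of difference from adjacency
  have hmem : ∀ u v : ZMod (2 * m), (circulantGraph S).Adj u v → v - u ∈ S := by
    intro u v h
    rw [circulantGraph_adj] at h
    rcases h.2 with h1 | h1
    · have := hS _ h1; rwa [neg_sub] at this
    · exact h1
  constructor
  · intro u v huv
    have hvu : v - u ∈ S := hmem u v huv
    rw [circulantGraph_adj, hα, hβ]
    by_cases hcase : v - u = M
    · -- v = u + M, so β v = σ u, difference is -M = M ∈ S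
      have hv : v = u + M := by rw [← hcase]; ring
      have hβv : σ (v + M) = σ u := by
        rw [hv, add_assoc, hMM, add_zero]
      constructor
      · rw [hβv]
        intro h
        have : M = 0 := by
          have := congrArg (· - σ u) h
          simpa using this
        exact hMne this
      · left
        rw [hβv]
        have : σ u + M - σ u = M := by ring
        rw [this]
        rw [← hcase] at *
        exact hvu
    · -- v - u ∈ S \ {M}
      have hvuS : v - u ∈ S \ {M} := ⟨hvu, hcase⟩
      set T : Set (ZMod (2 * m)) := (· + M) '' (S \ {M}) with hT
      have hTadj : (circulantGraph T).Adj u (v + M) := by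
        rw [circulantGraph_adj]
        constructor
        · intro h
          apply hcase
          rw [h]
          linear_combination hnegM
        · right
          refine ⟨v - u, hvuS, ?_⟩
          ring
      have hTadj2 := (hσadj u (v + M)).mp hTadj
      rw [circulantGraph_adj] at hTadj2
      have key : σ (v + M) - σ u ∈ T := by
        rcases hTadj2.2 with h1 | h1
        · -- σ u - σ (v+M) ∈ T; use T closed under negation
          rcases h1 with ⟨s, hs, hseq⟩
          refine ⟨-s, ⟨hS _ hs.1, ?_⟩, ?_⟩
          · intro h
            apply hs.2
            have h' : -s = M := h
            show s = M
            linear_combination hnegM - h'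
          · simp only at hseq ⊢
            linear_combination hMM - hseq
        · exact h1
      rcases key with ⟨s, hs, hseq⟩
      simp only at hseq
      have hdiff : σ (v + M) - (σ u + M) = s := by
        linear_combination -hseq
      constructor
      · intro h
        have hs0 : s = 0 := by rw [← hdiff, h]; ring
        exact h0 (hs0 ▸ hs.1)
      · right
        rw [hdiff]
        exact hs.1
  · intro h
    apply hσm
    have h0eq := congrArg (fun f : Equiv.Perm (ZMod (2 * m)) => f 0) h
    simp only [hα, hβ, hσ0, zero_add] at h0eq
    exact h0eq.symm
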